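/- Let ‖·‖ be a norm on ℝ² whose closed unit ball equals the convex hull of a finite set of points all of whose coordinates are rational. Then there exist finitely many vectors β₁, …, β_m ∈ ℚ² such that ‖v‖ = Σ_{i=1}^m |⟨β_i, v⟩| for all v ∈ ℝ². That is, every norm on the plane with a rational polygonal unit ball is a finite sum of absolute values of rational linear functionals. -/

import Mathlib

noncomputable section PlanarAux

abbrev E2 := EuclideanSpace ℝ (Fin 2)

/-- 2D determinant. -/
def dt (p q : E2) : ℝ := p 0 * q 1 - p 1 * q 0

/-- rotation by 90 degrees. -/
def Jv (p : E2) : E2 := (WithLp.equiv 2 (Fin 2 → ℝ)).symm ![-(p 1), p 0]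

@[simp] lemma Jv_apply0 (p : E2) : Jv p 0 = -(p 1) := rfl
@[simp] lemma Jv_apply1 (p : E2) : Jv p 1 = p 0 := rfl

@[simp] lemma E2_add_apply (x y : E2) (j : Fin 2) : (x + y) j = x j + y j := rfl
@[simp] lemma E2_sub_apply (x y : E2) (j : Fin 2) : (x - y) j = x j - y j := rfl
@[simp] lemma E2_neg_apply (x : E2) (j : Fin 2) : (-x) j = -(x j) := rfl
@[simp] lemma E2_smul_apply (c : ℝ) (x : E2) (j : Fin 2) : (c • x) j = c * x j := rfl
@[simp] lemma E2_zero_apply (j : Fin 2) : (0 : E2) j = 0 := rfl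

lemma inner_E2 (x y : E2) : (inner ℝ x y : ℝ) = x 0 * y 0 + x 1 * y 1 := by
  rw [PiLp.inner_apply, Fin.sum_univ_two]
  simp [RCLike.inner_apply]
  ring

lemma inner_Jv (p v : E2) : (inner ℝ (Jv p) v : ℝ) = dt p v := by
  rw [inner_E2]; simp [dt]; ring

lemma E2_ext {x y : E2} (h0 : x 0 = y 0) (h1 : x 1 = y 1) : x = y := by
  apply PiLp.ext; intro j; fin_cases j <;> assumption

lemma E2_ne_zero_iff {x : E2} : x ≠ 0 ↔ (x 0 ≠ 0 ∨ x 1 ≠ 0) := by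
  constructor
  · intro h
    by_contra hc
    push_neg at hc
    exact h (E2_ext hc.1 hc.2)
  · rintro (h | h) h0 <;> rw [h0] at h <;> simp at h

lemma dt_swap (p q : E2) : dt p q = - dt q p := by simp [dt]; ring
lemma dt_self (p : E2) : dt p p = 0 := by simp [dt]; ring
lemma dt_neg_right (p q : E2) : dt p (-q) = - dt p q := by simp [dt]; ring
lemma dt_neg_left (p q : E2) : dt (-p) q = - dt p q := by simp [dt]; ring
lemma dt_add_right (p q r : E2) : dt p (q + r) = dt p q + dt p r := by simp [dt]; ring
lemma dt_smul_right (c : ℝ) (p q : E2) : dt p (c • q) = c * dt p q := by simp [dt]; ring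
lemma dt_smul_left (c : ℝ) (p q : E2) : dt (c • p) q = c * dt p q := by simp [dt]; ring

/-- Cramer decomposition in 2D. -/
lemma cramer {p q : E2} (h : dt p q ≠ 0) (s : E2) :
    s = ((dt s q) / (dt p q)) • p + ((dt p s) / (dt p q)) • q := by
  apply E2_ext <;> · simp only [E2_add_apply, E2_smul_apply]; rw [div_mul_eq_mul_div, div_mul_eq_mul_div, ← add_div, eq_div_iff h]; simp only [dt]; ring

/-- "upper half plane" predicate. -/
def upv (v : E2) : Prop := 0 < v 1 ∨ (v 1 = 0 ∧ 0 < v 0)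

lemma upv_ne_zero {v : E2} (h : upv v) : v ≠ 0 := by
  rcases h with h | ⟨h1, h0⟩
  · exact E2_ne_zero_iff.2 (Or.inr (ne_of_gt h))
  · exact E2_ne_zero_iff.2 (Or.inl (ne_of_gt h0))

lemma up_or_up_neg {v : E2} (h : v ≠ 0) : upv v ∨ upv (-v) := by
  rcases E2_ne_zero_iff.1 h with h0 | h1
  · rcases lt_trichotomy (v 1) 0 with h' | h' | h'
    · right; left; simpa using h'
    · rcases lt_trichotomy (v 0) 0 with h'' | h'' | h''
      · right; right; constructor <;> simp [h', h'']
      · exact absurd h'' h0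
      · left; right; exact ⟨h', h''⟩
    · left; left; exact h'
  · rcases lt_trichotomy (v 1) 0 with h' | h' | h'
    · right; left; simpa using h'
    · exact absurd h' h1
    · left; left; exact h'

lemma up_parallel {p q : E2} (hp : upv p) (hq : upv q) (h : dt p q = 0) :
    ∃ c : ℝ, 0 < c ∧ q = c • p := by
  rcases hp with hp1 | ⟨hp1, hp0⟩
  · refine ⟨q 1 / p 1, ?_, ?_⟩
    · rcases hq with hq1 | ⟨hq1, hq0⟩
      · positivity
      · -- q 1 = 0, then dt p q = - p 1 * q 0 = 0 so q 0 = 0, contradiction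
        exfalso
        simp [dt, hq1] at h
        rcases h with h | h
        · exact absurd h (ne_of_gt hp1)
        · exact absurd h (ne_of_gt hq0)
    · apply E2_ext
      · simp [dt] at h
        rw [E2_smul_apply]
        field_simp
        nlinarith [h]
      · rw [E2_smul_apply]
        field_simp
  · -- p 1 = 0, 0 < p 0 : dt p q = p 0 * q 1 = 0 so q 1 = 0, hence q 0 > 0
    have hq1 : q 1 = 0 := by
      simp [dt, hp1] at h
      rcases h with h | h
      · exact absurd h (ne_of_gt hp0)
      · exact h
    have hq0 : 0 < q 0 := by
      rcases hq with hq | hq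
      · rw [hq1] at hq; exact absurd hq (lt_irrefl _)
      · exact hq.2
    refine ⟨q 0 / p 0, by positivity, ?_⟩
    apply E2_ext
    · rw [E2_smul_apply]
      field_simp
    · simp [hp1, hq1]

/-- transitivity of the angular order on the (closed) upper half plane. -/
lemma up_trans {a b c : E2} (ha : upv a) (hb : upv b) (hc : upv c)
    (hab : 0 < dt a b) (hbc : 0 < dt b c) : 0 < dt a c := by
  -- b 1 = 0 is impossible unless it forces contradiction with a upper
  rcases hb with hb1 | ⟨hb1, hb0⟩
  · -- main case: b 1 > 0
    rcases ha with ha1 | ⟨ha1, ha0⟩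
    · rcases hc with hc1 | ⟨hc1, hc0⟩
      · -- all strictly upper: use the Cramer identity on second coordinates
        -- dt a c * b 1 = dt a b * c 1 + dt b c * a 1
        have key : dt a c * b 1 = dt a b * c 1 + dt b c * a 1 := by
          simp [dt]; ring
        nlinarith
      · -- c 1 = 0, c 0 > 0: dt b c = -(b 1) * c 0 < 0, contradiction
        exfalso
        have : dt b c = -(b 1) * c 0 := by simp [dt, hc1]
        nlinarith
    · -- a 1 = 0, a 0 > 0 : dt a c = a 0 * c 1, need c 1 > 0
      have hac : dt a c = a 0 * c 1 := by simp [dt, ha1]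
      rcases hc with hc1 | ⟨hc1, hc0⟩
      · rw [hac]; positivity
      · exfalso
        have : dt b c = -(b 1) * c 0 := by simp [dt, hc1]
        nlinarith
  · -- b 1 = 0, b 0 > 0: then dt a b = -(a 1) * b 0 > 0 needs a 1 < 0, contra upv a
    exfalso
    have hab' : dt a b = -(a 1) * b 0 := by simp [dt, hb1]
    rcases ha with ha1 | ⟨ha1, ha0⟩
    · nlinarith
    · rw [ha1] at hab'; simp [hab'] at hab

/-- sign-aligned absolute value splitting. -/
lemma abs_add_mul_of_sign {X Y a b : ℝ} (ha : 0 ≤ a) (hb : 0 ≤ b)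
    (h : (0 ≤ X ∧ 0 ≤ Y) ∨ (X ≤ 0 ∧ Y ≤ 0)) :
    |a * X + b * Y| = a * |X| + b * |Y| := by
  rcases h with ⟨hX, hY⟩ | ⟨hX, hY⟩
  · rw [abs_of_nonneg hX, abs_of_nonneg hY, abs_of_nonneg (by positivity)]
  · rw [abs_of_nonpos hX, abs_of_nonpos hY, abs_of_nonpos (by nlinarith)]; ring




-- additional lemmas
lemma dt_add_left (p q x : E2) : dt (p + q) x = dt p x + dt q x := by simp [dt]; ring

lemma dt_sub_left (p q x : E2) : dt (p - q) x = dt p x - dt q x := by simp [dt]; ring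
lemma dt_zero_right (p : E2) : dt p 0 = 0 := by simp [dt]
lemma dt_zero_left (p : E2) : dt 0 p = 0 := by simp [dt]

lemma inner_Jv_self (p : E2) : (inner ℝ (Jv p) (Jv p) : ℝ) = p 0 * p 0 + p 1 * p 1 := by
  rw [inner_E2]; simp; ring

lemma inner_Jv_self_pos {p : E2} (h : p ≠ 0) : 0 < (inner ℝ (Jv p) (Jv p) : ℝ) := by
  rw [inner_Jv_self]
  rcases E2_ne_zero_iff.1 h with h | h <;>
    nlinarith [mul_self_pos.2 h, mul_self_nonneg (p 0), mul_self_nonneg (p 1)]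

lemma Jv_ne_zero {p : E2} (h : p ≠ 0) : Jv p ≠ 0 := by
  intro hc
  apply h
  apply E2_ext
  · have h1 : Jv p 1 = (0 : E2) 1 := by rw [hc]
    simpa using h1
  · have h0 : Jv p 0 = (0 : E2) 0 := by rw [hc]
    simp at h0
    simpa using h0
/-- a vector orthogonal to `u ≠ 0` is a multiple of `Jv u`. -/
lemma perp2 {u x : E2} (hu : u ≠ 0) (h : (inner ℝ x u : ℝ) = 0) :
    x = ((inner ℝ x (Jv u) : ℝ) / (inner ℝ (Jv u) (Jv u) : ℝ)) • Jv u := by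
  have hss : (inner ℝ (Jv u) (Jv u) : ℝ) = u 0 * u 0 + u 1 * u 1 := inner_Jv_self u
  have hpos : 0 < (inner ℝ (Jv u) (Jv u) : ℝ) := inner_Jv_self_pos hu
  have hne : u 0 * u 0 + u 1 * u 1 ≠ 0 := by rw [← hss]; exact ne_of_gt hpos
  rw [inner_E2] at h
  apply E2_ext
  · rw [E2_smul_apply, inner_E2, hss]
    simp only [Jv_apply0, Jv_apply1]
    rw [div_mul_eq_mul_div, eq_div_iff hne]
    linear_combination u 0 * h
  · rw [E2_smul_apply, inner_E2, hss]
    simp only [Jv_apply0, Jv_apply1]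
    rw [div_mul_eq_mul_div, eq_div_iff hne]
    linear_combination u 1 * h

/-- rationality of a vector -/
def ratv (x : E2) : Prop := ∀ j : Fin 2, ∃ q : ℚ, x j = (q : ℝ)

lemma ratv_neg {x : E2} (h : ratv x) : ratv (-x) := by
  intro j; obtain ⟨q, hq⟩ := h j; exact ⟨-q, by simp [hq]⟩

lemma ratv_sub {x y : E2} (hx : ratv x) (hy : ratv y) : ratv (x - y) := by
  intro j
  obtain ⟨q, hq⟩ := hx j; obtain ⟨r, hr⟩ := hy j
  exact ⟨q - r, by simp [hq, hr]⟩

lemma ratv_Jv {x : E2} (h : ratv x) : ratv (Jv x) := by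
  intro j
  fin_cases j
  · obtain ⟨q, hq⟩ := h 1; exact ⟨-q, by simp [hq]⟩
  · obtain ⟨q, hq⟩ := h 0; exact ⟨q, by simp [hq]⟩

lemma ratv_smul {c : ℝ} {x : E2} (hc : ∃ q : ℚ, c = (q : ℝ)) (h : ratv x) : ratv (c • x) := by
  intro j
  obtain ⟨q, hq⟩ := hc; obtain ⟨r, hr⟩ := h j
  exact ⟨q * r, by simp [hq, hr]⟩

lemma rat_inner {x y : E2} (hx : ratv x) (hy : ratv y) : ∃ q : ℚ, (inner ℝ x y : ℝ) = (q : ℝ) := by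
  obtain ⟨a0, h0⟩ := hx 0; obtain ⟨a1, h1⟩ := hx 1
  obtain ⟨b0, g0⟩ := hy 0; obtain ⟨b1, g1⟩ := hy 1
  exact ⟨a0 * b0 + a1 * b1, by rw [inner_E2, h0, h1, g0, g1]; push_cast; ring⟩

lemma rat_dt {x y : E2} (hx : ratv x) (hy : ratv y) : ∃ q : ℚ, dt x y = (q : ℝ) := by
  rw [← inner_Jv]
  exact rat_inner (ratv_Jv hx) hy



lemma inner_self_pos2 {x : E2} (h : x ≠ 0) : 0 < (inner ℝ x x : ℝ) := by
  rw [inner_E2]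
  rcases E2_ne_zero_iff.1 h with h | h <;>
    nlinarith [mul_self_pos.2 h, mul_self_nonneg (x 0), mul_self_nonneg (x 1)]

end PlanarAux

set_option maxHeartbeats 1600000 in
/-- every norm on `ℝ²` whose closed unit ball is the convex hull of a
finite set of rational points is a finite sum of absolute values of rational linear
functionals. -/
theorem planar_rational_polygonal_norm_is_sum_abs_inner
    (N : EuclideanSpace ℝ (Fin 2) → ℝ)
    (hadd : ∀ v w, N (v + w) ≤ N v + N w)
    (hsmul : ∀ (a : ℝ) (v : EuclideanSpace ℝ (Fin 2)), N (a • v) = |a| * N v)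
    (hdef : ∀ v, N v = 0 → v = 0)
    (S : Finset (EuclideanSpace ℝ (Fin 2)))
    (hSrat : ∀ p ∈ S, ∀ j : Fin 2, ∃ q : ℚ, p j = (q : ℝ))
    (hball : {v : EuclideanSpace ℝ (Fin 2) | N v ≤ 1} =
      convexHull ℝ (S : Set (EuclideanSpace ℝ (Fin 2)))) :
    ∃ (m : ℕ) (β : Fin m → EuclideanSpace ℝ (Fin 2)),
      (∀ (i : Fin m) (j : Fin 2), ∃ q : ℚ, β i j = (q : ℝ)) ∧
      ∀ v, N v = ∑ i, |(inner ℝ (β i) v : ℝ)| := by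
  classical
  -- ## basic facts about the norm
  have hN0 : N 0 = 0 := by
    have h := hsmul 0 0
    simpa using h
  have hNeven : ∀ v, N (-v) = N v := by
    intro v
    have h := hsmul (-1) v
    simpa using h
  have hNnonneg : ∀ v, 0 ≤ N v := by
    intro v
    have h := hadd v (-v)
    rw [add_neg_cancel, hN0, hNeven] at h
    linarith
  have hNpos : ∀ v : E2, v ≠ 0 → 0 < N v := by
    intro v hv
    rcases lt_or_eq_of_le (hNnonneg v) with h | h
    · exact h
    · exact absurd (hdef v h.symm) hv
  have hNsm : ∀ (a : ℝ), 0 ≤ a → ∀ v : E2, N (a • v) = a * N v := by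
    intro a ha v
    rw [hsmul, abs_of_nonneg ha]
  have hNcombo : ∀ (a b : ℝ) (x y : E2), 0 ≤ a → 0 ≤ b →
      N (a • x + b • y) ≤ a * N x + b * N y := by
    intro a b x y ha hb
    calc N (a • x + b • y) ≤ N (a • x) + N (b • y) := hadd _ _
    _ = a * N x + b * N y := by rw [hNsm a ha, hNsm b hb]
  have hB1 : ∀ v : E2, N v ≤ 1 ↔ v ∈ convexHull ℝ (S : Set E2) := by
    intro v
    exact Set.ext_iff.1 hball v
  -- a point on the unit sphere
  have he : (EuclideanSpace.single (0 : Fin 2) (1:ℝ)) ≠ 0 := by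
    intro h
    have := congrFun (congrArg (fun x : E2 => (x : Fin 2 → ℝ)) h) 0
    simp at this
  set e : E2 := EuclideanSpace.single (0 : Fin 2) (1:ℝ) with hedef
  have hce : 0 < N e := hNpos e he
  set w0 : E2 := (N e)⁻¹ • e with hw0def
  have hw0ne : w0 ≠ 0 := smul_ne_zero (inv_ne_zero (ne_of_gt hce)) he
  have hNw0 : N w0 = 1 := by
    rw [hw0def, hNsm _ (le_of_lt (inv_pos.2 hce)), inv_mul_cancel₀ (ne_of_gt hce)]
  -- ## the finite symmetric set P
  have hSex : ∃ p ∈ S, p ≠ 0 := by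
    by_contra hc
    push_neg at hc
    have hsub : (S : Set E2) ⊆ {(0:E2)} := by
      intro x hx
      simp only [Set.mem_singleton_iff]
      exact hc x hx
    have h2 : convexHull ℝ (S : Set E2) ⊆ {(0:E2)} :=
      convexHull_min hsub (convex_singleton 0)
    have h3 : w0 ∈ convexHull ℝ (S : Set E2) := (hB1 w0).1 (le_of_eq hNw0)
    exact hw0ne (h2 h3)
  set P : Finset E2 := (S ∪ S.image (fun x => -x)).erase 0 with hPdef
  have hPmem : ∀ x : E2, x ∈ P ↔ (x ≠ 0 ∧ (x ∈ S ∨ -x ∈ S)) := by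
    intro x
    rw [hPdef, Finset.mem_erase, Finset.mem_union, Finset.mem_image]
    constructor
    · rintro ⟨hne, hx | ⟨a, ha, rfl⟩⟩
      · exact ⟨hne, Or.inl hx⟩
      · exact ⟨hne, Or.inr (by simpa using ha)⟩
    · rintro ⟨hne, hx | hx⟩
      · exact ⟨hne, Or.inl hx⟩
      · exact ⟨hne, Or.inr ⟨-x, hx, by simp⟩⟩
  have hPsym : ∀ p ∈ P, -p ∈ P := by
    intro p hp
    rw [hPmem] at hp ⊢
    refine ⟨neg_ne_zero.2 hp.1, ?_⟩
    rcases hp.2 with h | h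
    · exact Or.inr (by simpa using h)
    · exact Or.inl h
  have hPle : ∀ p ∈ P, N p ≤ 1 := by
    intro p hp
    rw [hPmem] at hp
    rcases hp.2 with h | h
    · exact (hB1 p).2 (subset_convexHull ℝ (S : Set E2) h)
    · have := (hB1 (-p)).2 (subset_convexHull ℝ (S : Set E2) h)
      rwa [hNeven] at this
  have hPne : ∀ p ∈ P, p ≠ 0 := fun p hp => ((hPmem p).1 hp).1
  have hPrat : ∀ p ∈ P, ratv p := by
    intro p hp
    rw [hPmem] at hp
    rcases hp.2 with h | h
    · exact fun j => hSrat p h j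
    · intro j
      obtain ⟨q, hq⟩ := hSrat (-p) h j
      exact ⟨-q, by rw [E2_neg_apply] at hq; push_cast; linarith⟩
  obtain ⟨p₀, hp₀S, hp₀ne⟩ := hSex
  have hp₀P : p₀ ∈ P := (hPmem p₀).2 ⟨hp₀ne, Or.inl hp₀S⟩
  have h0P : (0:E2) ∈ convexHull ℝ (P : Set E2) := by
    have hcx := convex_convexHull ℝ (P : Set E2)
    have h1 := subset_convexHull ℝ (P : Set E2) hp₀P
    have h2 := subset_convexHull ℝ (P : Set E2) (hPsym p₀ hp₀P)
    have h3 := hcx h1 h2 (by norm_num : (0:ℝ) ≤ 1/2) (by norm_num : (0:ℝ) ≤ 1/2) (by norm_num)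
    have h4 : (1/2 : ℝ) • p₀ + (1/2 : ℝ) • (-p₀) = 0 := by
      rw [smul_neg, ← sub_eq_add_neg, sub_self]
    rwa [h4] at h3
  have hBP : ∀ v : E2, N v ≤ 1 → v ∈ convexHull ℝ (P : Set E2) := by
    intro v hv
    have hvS := (hB1 v).1 hv
    have hsub : (S : Set E2) ⊆ convexHull ℝ (P : Set E2) := by
      intro x hxS
      by_cases hx0 : x = 0
      · rw [hx0]; exact h0P
      · exact subset_convexHull ℝ _ ((hPmem x).2 ⟨hx0, Or.inl hxS⟩)
    exact convexHull_min hsub (convex_convexHull ℝ _) hvS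
  -- ## supporting halfplane machinery
  have hull_le : ∀ (f : E2) (M : ℝ), (∀ t ∈ P, (inner ℝ f t : ℝ) ≤ M) →
      ∀ v : E2, N v ≤ 1 → (inner ℝ f v : ℝ) ≤ M := by
    intro f M hf v hv
    have hlin : IsLinearMap ℝ (fun x : E2 => (inner ℝ f x : ℝ)) :=
      ⟨fun x y => inner_add_right f x y, fun c x => real_inner_smul_right f x c⟩
    have hconv : Convex ℝ {x : E2 | (inner ℝ f x : ℝ) ≤ M} := convex_halfSpace_le hlin M
    have hsub : (P : Set E2) ⊆ {x : E2 | (inner ℝ f x : ℝ) ≤ M} := by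
      intro t ht
      exact hf t (Finset.mem_coe.1 ht)
    exact convexHull_min hsub hconv (hBP v hv)
  have L1 : ∀ (f w : E2), N w ≤ 1 → 0 < (inner ℝ f w : ℝ) →
      ∃ s ∈ P, N s = 1 ∧ (inner ℝ f w : ℝ) ≤ (inner ℝ f s : ℝ) := by
    intro f w hw hfw
    have hPnonempty : P.Nonempty := by
      rcases Finset.eq_empty_or_nonempty P with h | h
      · exfalso
        have := hBP w hw
        rw [h] at this
        simp at this
      · exact h
    obtain ⟨s, hsP, hsmax⟩ := P.exists_max_image (fun t => (inner ℝ f t : ℝ)) hPnonempty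
    have h1 : (inner ℝ f w : ℝ) ≤ inner ℝ f s := hull_le f (inner ℝ f s) hsmax w hw
    have hfs : 0 < (inner ℝ f s : ℝ) := lt_of_lt_of_le hfw h1
    have hs0 : s ≠ 0 := by
      rintro rfl
      simp [inner_zero_right] at hfs
    have hNs : 0 < N s := hNpos s hs0
    have hNs1 : N s ≤ 1 := hPle s hsP
    have h2 : (inner ℝ f ((N s)⁻¹ • s) : ℝ) ≤ inner ℝ f s := by
      apply hull_le f _ hsmax
      rw [hNsm _ (le_of_lt (inv_pos.2 hNs)), inv_mul_cancel₀ (ne_of_gt hNs)]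
    rw [real_inner_smul_right] at h2
    have h3 : 1 ≤ N s := by
      by_contra hcon
      push_neg at hcon
      have h4 : 1 < (N s)⁻¹ := (one_lt_inv₀ hNs).2 hcon
      nlinarith
    exact ⟨s, hsP, le_antisymm hNs1 h3, h1⟩
  -- ## the vertex set and its angular order
  set V : Finset E2 := P.filter (fun p => N p = 1) with hVdef
  have hVmem : ∀ x : E2, x ∈ V ↔ x ∈ P ∧ N x = 1 := by
    intro x; rw [hVdef, Finset.mem_filter]
  set U : Finset E2 := V.filter upv with hUdef
  have hUmem : ∀ x : E2, x ∈ U ↔ x ∈ P ∧ N x = 1 ∧ upv x := by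
    intro x; rw [hUdef, Finset.mem_filter, hVmem]; tauto
  have hVtoU : ∀ x ∈ V, x ∈ U ∨ -x ∈ U := by
    intro x hx
    rw [hVmem] at hx
    rcases up_or_up_neg (hPne x hx.1) with h | h
    · exact Or.inl ((hUmem x).2 ⟨hx.1, hx.2, h⟩)
    · refine Or.inr ((hUmem (-x)).2 ⟨hPsym x hx.1, ?_, h⟩)
      rw [hNeven]; exact hx.2
  have htri : ∀ x y : E2, x ∈ U → y ∈ U → x ≠ y → 0 < dt x y ∨ 0 < dt y x := by
    intro x y hx hy hne
    rw [hUmem] at hx hy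
    rcases lt_trichotomy (dt x y) 0 with h | h | h
    · right; rw [dt_swap]; linarith
    · exfalso
      obtain ⟨c, hc, hcy⟩ := up_parallel hx.2.2 hy.2.2 h
      have : N y = c := by
        rw [hcy, hNsm c (le_of_lt hc), hx.2.1, mul_one]
      rw [hy.2.1] at this
      rw [← this, one_smul] at hcy
      exact hne hcy.symm
    · left; exact h
    -- ## sort U by angle
  let r : {x : E2 // x ∈ U} → {x : E2 // x ∈ U} → Prop :=
    fun p q => p = q ∨ 0 < dt p.1 q.1
  haveI : IsTrans {x : E2 // x ∈ U} r := by
    constructor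
    rintro a b c (rfl | hab) hbc
    · exact hbc
    · rcases hbc with rfl | hbc
      · exact Or.inr hab
      · refine Or.inr (up_trans ?_ ?_ ?_ hab hbc)
        · exact ((hUmem a.1).1 a.2).2.2
        · exact ((hUmem b.1).1 b.2).2.2
        · exact ((hUmem c.1).1 c.2).2.2
  haveI : IsAntisymm {x : E2 // x ∈ U} r := by
    constructor
    rintro a b (rfl | hab) hba
    · rfl
    · rcases hba with rfl | hba
      · rfl
      · rw [dt_swap] at hba
        linarith
  haveI : IsTotal {x : E2 // x ∈ U} r := by
    constructor
    intro a b
    by_cases hab : a = b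
    · exact Or.inl (Or.inl hab)
    · have hne : a.1 ≠ b.1 := fun h => hab (Subtype.ext h)
      rcases htri a.1 b.1 a.2 b.2 hne with h | h
      · exact Or.inl (Or.inr h)
      · exact Or.inr (Or.inr h)
  haveI : DecidableRel r := Classical.decRel _
  set L : List {x : E2 // x ∈ U} := Finset.sort U.attach r with hLdef
  set m : ℕ := L.length with hmdef
  set u : ℕ → E2 := fun i => if h : i < m then (L.get ⟨i, h⟩).1 else 0 with hudef
  have hu_mem : ∀ i, i < m → u i ∈ U := by
    intro i hi
    rw [hudef]
    simp only [hi, dif_pos]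
    exact (L.get ⟨i, hi⟩).2
  have hu_up : ∀ i, i < m → upv (u i) := fun i hi => ((hUmem _).1 (hu_mem i hi)).2.2
  have hu_N : ∀ i, i < m → N (u i) = 1 := fun i hi => ((hUmem _).1 (hu_mem i hi)).2.1
  have hu_P : ∀ i, i < m → u i ∈ P := fun i hi => ((hUmem _).1 (hu_mem i hi)).1
  have horder : ∀ i j, i < j → j < m → 0 < dt (u i) (u j) := by
    intro i j hij hj
    have hi : i < m := lt_trans hij hj
    have hsorted : List.Pairwise r L := Finset.pairwise_sort (r := r) (s := U.attach)
    have hnd : L.Nodup := Finset.sort_nodup (r := r) (s := U.attach)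
    have hr := List.pairwise_iff_get.1 hsorted ⟨i, hi⟩ ⟨j, hj⟩ hij
    rcases hr with heq | hpos
    · exfalso
      have hinj := List.nodup_iff_injective_get.1 hnd heq
      have : i = j := congrArg Fin.val hinj
      omega
    · rw [hudef]
      simp only [hi, hj, dif_pos]
      exact hpos
  have hlt : ∀ i j, i < m → j < m → 0 < dt (u i) (u j) → i < j := by
    intro i j hi hj hd
    by_contra hc
    push_neg at hc
    rcases lt_or_eq_of_le hc with h | h
    · have := horder j i h hi
      rw [dt_swap] at hd
      linarith
    · rw [h] at hd
      rw [dt_self] at hd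
      linarith
  have hUsurj : ∀ x ∈ U, ∃ i, i < m ∧ u i = x := by
    intro x hx
    have hmem : (⟨x, hx⟩ : {y : E2 // y ∈ U}) ∈ L := by
      rw [hLdef, Finset.mem_sort]
      exact Finset.mem_attach _ _
    obtain ⟨i, hget⟩ := List.get_of_mem hmem
    refine ⟨i.1, i.2, ?_⟩
    rw [hudef]
    simp only [i.2, dif_pos]
    rw [dif_pos (show (i : ℕ) < m from i.2), Fin.eta, hget]
  -- ## m ≥ 2
  have hm2 : 2 ≤ m := by
    -- first element of U
    have hw0in : 0 < (inner ℝ w0 w0 : ℝ) := inner_self_pos2 hw0ne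
    obtain ⟨s0, hs0P, hs0N, _⟩ := L1 w0 w0 (le_of_eq hNw0) hw0in
    have hs0V : s0 ∈ V := (hVmem s0).2 ⟨hs0P, hs0N⟩
    obtain ⟨x₀, hx₀U⟩ : ∃ x, x ∈ U := by
      rcases hVtoU s0 hs0V with h | h
      · exact ⟨s0, h⟩
      · exact ⟨-s0, h⟩
    have hx₀ne : x₀ ≠ 0 := hPne x₀ ((hUmem x₀).1 hx₀U).1
    have hJne : Jv x₀ ≠ 0 := Jv_ne_zero hx₀ne
    have hcJ : 0 < N (Jv x₀) := hNpos _ hJne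
    have hJJ : 0 < (inner ℝ (Jv x₀) (Jv x₀) : ℝ) := inner_Jv_self_pos hx₀ne
    have hNwJ : N ((N (Jv x₀))⁻¹ • Jv x₀) = 1 := by
      rw [hNsm _ (le_of_lt (inv_pos.2 hcJ)), inv_mul_cancel₀ (ne_of_gt hcJ)]
    have hinpos : 0 < (inner ℝ (Jv x₀) ((N (Jv x₀))⁻¹ • Jv x₀) : ℝ) := by
      rw [real_inner_smul_right]
      exact mul_pos (inv_pos.2 hcJ) hJJ
    obtain ⟨s, hsP, hsN, hsge⟩ := L1 (Jv x₀) _ (le_of_eq hNwJ) hinpos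
    have hdts : 0 < dt x₀ s := by
      rw [← inner_Jv]
      exact lt_of_lt_of_le hinpos hsge
    have hsV : s ∈ V := (hVmem s).2 ⟨hsP, hsN⟩
    obtain ⟨y, hyU, hyne⟩ : ∃ y, y ∈ U ∧ y ≠ x₀ := by
      rcases hVtoU s hsV with h | h
      · refine ⟨s, h, ?_⟩
        intro hc
        rw [hc, dt_self] at hdts
        linarith
      · refine ⟨-s, h, ?_⟩
        intro hc
        rw [← hc, dt_neg_left, dt_self] at hdts
        simp at hdts
    have hcard : 2 ≤ U.card := Finset.one_lt_card.2 ⟨y, hyU, x₀, hx₀U, hyne⟩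
    have hmcard : m = U.card := by
      rw [hmdef, hLdef, Finset.length_sort, Finset.card_attach]
    omega
    -- ## edges and outward normals
  set Q : ℕ → E2 := fun j => if j = m - 1 then -(u 0) else u (j + 1) with hQdef
  have hQlast : Q (m - 1) = -(u 0) := by
    simp only [hQdef]
    norm_num
  have hQlt : ∀ j, j ≠ m - 1 → Q j = u (j + 1) := by
    intro j hj
    simp only [hQdef]
    rw [if_neg hj]
  have hQP : ∀ j, j < m → Q j ∈ P := by
    intro j hj
    by_cases hjm : j = m - 1
    · rw [hjm, hQlast]
      exact hPsym _ (hu_P 0 (by omega))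
    · rw [hQlt j hjm]
      exact hu_P (j+1) (by omega)
  have hQN : ∀ j, j < m → N (Q j) = 1 := by
    intro j hj
    by_cases hjm : j = m - 1
    · rw [hjm, hQlast, hNeven]
      exact hu_N 0 (by omega)
    · rw [hQlt j hjm]
      exact hu_N (j+1) (by omega)
  have hD : ∀ j, j < m → 0 < dt (u j) (Q j) := by
    intro j hj
    by_cases hjm : j = m - 1
    · rw [hjm, hQlast, dt_neg_right, ← dt_swap]
      exact horder 0 (m-1) (by omega) (by omega)
    · rw [hQlt j hjm]
      exact horder j (j+1) (by omega) (by omega)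
  set n : ℕ → E2 := fun j => (dt (u j) (Q j))⁻¹ • Jv (u j - Q j) with hndef
  have hnu : ∀ j, j < m → (inner ℝ (n j) (u j) : ℝ) = 1 := by
    intro j hj
    rw [hndef]
    simp only
    rw [real_inner_smul_left, inner_Jv, dt_sub_left, dt_self, dt_swap (Q j) (u j)]
    rw [zero_sub, neg_neg]
    exact inv_mul_cancel₀ (ne_of_gt (hD j hj))
  have hnQ : ∀ j, j < m → (inner ℝ (n j) (Q j) : ℝ) = 1 := by
    intro j hj
    rw [hndef]
    simp only
    rw [real_inner_smul_left, inner_Jv, dt_sub_left, dt_self, sub_zero]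
    exact inv_mul_cancel₀ (ne_of_gt (hD j hj))
  -- ## the key geometric fact: the edge lines support the whole of P
  have hgood : ∀ j, j < m → ∀ t ∈ P, (inner ℝ (n j) t : ℝ) ≤ 1 := by
    intro j hj t htP
    by_contra hcon
    push_neg at hcon
    have htne : t ≠ 0 := hPne t htP
    have hNt : 0 < N t := hNpos t htne
    have hNt1 : N t ≤ 1 := hPle t htP
    have hw : N ((N t)⁻¹ • t) = 1 := by
      rw [hNsm _ (le_of_lt (inv_pos.2 hNt)), inv_mul_cancel₀ (ne_of_gt hNt)]
    have hgt : 1 < (inner ℝ (n j) ((N t)⁻¹ • t) : ℝ) := by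
      rw [real_inner_smul_right]
      nlinarith [inv_mul_cancel₀ (ne_of_gt hNt), inv_pos.2 hNt]
    obtain ⟨s, hsP, hsN, hsge⟩ := L1 (n j) _ (le_of_eq hw) (lt_trans one_pos hgt)
    have hs1 : 1 < (inner ℝ (n j) s : ℝ) := lt_of_lt_of_le hgt hsge
    have hDj : 0 < dt (u j) (Q j) := hD j hj
    set a : ℝ := dt s (Q j) / dt (u j) (Q j) with hadef
    set b : ℝ := dt (u j) s / dt (u j) (Q j) with hbdef
    have hs : s = a • (u j) + b • (Q j) := cramer (ne_of_gt hDj) s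
    have hab : (inner ℝ (n j) s : ℝ) = a + b := by
      rw [hs, inner_add_right, real_inner_smul_right, real_inner_smul_right,
        hnu j hj, hnQ j hj]
      ring
    have hab1 : 1 < a + b := by rw [← hab]; exact hs1
    have hNp : N (u j) = 1 := hu_N j hj
    have hNq : N (Q j) = 1 := hQN j hj
    rcases le_or_gt b 0 with hb | hb
    · -- t beyond the edge, on the far side of u j : contradicts N (u j) = 1
      have ha1 : 1 < a := by linarith
      have ha0 : (0:ℝ) < a := by linarith
      have hane : a ≠ 0 := ne_of_gt ha0
      have hpe : u j = a⁻¹ • s + (-b * a⁻¹) • (Q j) := by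
        rw [hs]
        apply E2_ext <;>
        · simp only [E2_add_apply, E2_smul_apply]
          field_simp
          ring
      have hle := hNcombo a⁻¹ (-b * a⁻¹) s (Q j) (le_of_lt (inv_pos.2 ha0))
        (mul_nonneg (by linarith) (le_of_lt (inv_pos.2 ha0)))
      rw [← hpe, hsN, hNq, hNp] at hle
      have hfin : a⁻¹ * 1 + -b * a⁻¹ * 1 < 1 := by
        have h6 : a⁻¹ * (1 - b) < a⁻¹ * a :=
          mul_lt_mul_of_pos_left (by linarith) (inv_pos.2 ha0)
        rw [inv_mul_cancel₀ (ne_of_gt ha0)] at h6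
        linarith
      linarith
    · rcases le_or_gt a 0 with hA | hA
      · -- far side of Q j : contradicts N (Q j) = 1
        have hb1 : 1 < b := by linarith
        have hb0 : (0:ℝ) < b := by linarith
        have hbne : b ≠ 0 := ne_of_gt hb0
        have hqe : Q j = b⁻¹ • s + (-a * b⁻¹) • (u j) := by
          rw [hs]
          apply E2_ext <;>
          · simp only [E2_add_apply, E2_smul_apply]
            field_simp
            ring
        have hle := hNcombo b⁻¹ (-a * b⁻¹) s (u j) (le_of_lt (inv_pos.2 hb0))
          (mul_nonneg (by linarith) (le_of_lt (inv_pos.2 hb0)))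
        rw [← hqe, hsN, hNp, hNq] at hle
        have hfin : b⁻¹ * 1 + -a * b⁻¹ * 1 < 1 := by
          have h6 : b⁻¹ * (1 - a) < b⁻¹ * b :=
            mul_lt_mul_of_pos_left (by linarith) (inv_pos.2 hb0)
          rw [inv_mul_cancel₀ (ne_of_gt hb0)] at h6
          linarith
        linarith
      · -- s strictly inside the cone : contradicts consecutiveness
        have hDne : dt (u j) (Q j) ≠ 0 := ne_of_gt hDj
        have hdps : 0 < dt (u j) s := by
          have heq : dt (u j) s = b * dt (u j) (Q j) := by
            rw [hbdef]
            field_simp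
          rw [heq]
          exact mul_pos hb hDj
        have hdsq : 0 < dt s (Q j) := by
          have heq : dt s (Q j) = a * dt (u j) (Q j) := by
            rw [hadef]
            field_simp
          rw [heq]
          exact mul_pos hA hDj
        have hsV : s ∈ V := (hVmem s).2 ⟨hsP, hsN⟩
        rcases hVtoU s hsV with hsU | hsU
        · obtain ⟨k, hk, hks⟩ := hUsurj s hsU
          have hjk : j < k := hlt j k hj hk (by rw [hks]; exact hdps)
          by_cases hjm : j = m - 1
          · omega
          · have hq' : Q j = u (j + 1) := hQlt j hjm
            have hkj : k < j + 1 := by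
              apply hlt k (j+1) hk (by omega)
              rw [hks, ← hq']
              exact hdsq
            omega
        · obtain ⟨k, hk, hks⟩ := hUsurj (-s) hsU
          have h1 : 0 < dt (u k) (u j) := by
            rw [hks, dt_neg_left, dt_swap s (u j)]
            simpa using hdps
          have hkj : k < j := hlt k j hk hj h1
          by_cases hjm : j = m - 1
          · -- Q j = -(u 0) : then dt (u 0) s > 0 forces k = 0 and contradiction
            have hq' : Q j = -(u 0) := by rw [← hjm] at hQlast; exact hQlast
            have h0s : 0 < dt (u 0) s := by
              rw [hq', dt_neg_right] at hdsq
              rw [dt_swap]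
              linarith
            have hk0 : k = 0 := by
              by_contra hk0
              have hok := horder 0 k (by omega) hk
              rw [hks, dt_neg_right] at hok
              linarith
            have hu0 : u 0 = -s := by rw [← hk0]; exact hks
            rw [hu0, dt_neg_left, dt_self] at h0s
            norm_num at h0s
          · have hq' : Q j = u (j + 1) := hQlt j hjm
            have h3 : 0 < dt s (u (j+1)) := by rw [← hq']; exact hdsq
            have h2 : 0 < dt (u (j+1)) (u k) := by
              rw [hks, dt_neg_right, dt_swap (u (j+1)) s]
              linarith
            have := hlt (j+1) k (by omega) hk h2
            omega
    -- ## previous-edge normals and vertex weights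
  set pn : ℕ → E2 := fun j => if j = 0 then -(n (m-1)) else n (j-1) with hpndef
  have hpn0 : pn 0 = -(n (m-1)) := by
    simp only [hpndef]
    norm_num
  have hpnpos : ∀ j, j ≠ 0 → pn j = n (j-1) := by
    intro j hj
    simp only [hpndef]
    rw [if_neg hj]
  have hnum1 : (inner ℝ (n (m-1)) (u 0) : ℝ) = -1 := by
    have h := hnQ (m-1) (by omega)
    rw [hQlast, inner_neg_right] at h
    linarith
  have hpnu : ∀ j, j < m → (inner ℝ (pn j) (u j) : ℝ) = 1 := by
    intro j hj
    by_cases hj0 : j = 0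
    · rw [hj0, hpn0, inner_neg_left, hnum1]
      norm_num
    · rw [hpnpos j hj0]
      have hjm : j - 1 ≠ m - 1 := by omega
      have hq : Q (j-1) = u j := by
        have e : j - 1 + 1 = j := by omega
        rw [hQlt _ hjm, e]
      rw [← hq]
      exact hnQ (j-1) (by omega)
  have hpnQ : ∀ j, j < m → (inner ℝ (pn j) (Q j) : ℝ) ≤ 1 := by
    intro j hj
    by_cases hj0 : j = 0
    · rw [hj0, hpn0, inner_neg_left]
      have hQ0 : Q 0 = u 1 := by
        rw [hQlt 0 (by omega)]
      rw [hQ0, ← inner_neg_right]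
      exact hgood (m-1) (by omega) (-(u 1)) (hPsym _ (hu_P 1 (by omega)))
    · rw [hpnpos j hj0]
      exact hgood (j-1) (by omega) (Q j) (hQP j hj)
  set μ : ℕ → ℝ :=
    fun j => (inner ℝ (n j - pn j) (Jv (u j)) : ℝ) / (inner ℝ (Jv (u j)) (Jv (u j)) : ℝ) with hμdef
  have hμeq : ∀ j, j < m → n j - pn j = μ j • Jv (u j) := by
    intro j hj
    have hune : u j ≠ 0 := upv_ne_zero (hu_up j hj)
    have hperp : (inner ℝ (n j - pn j) (u j) : ℝ) = 0 := by
      rw [inner_sub_left, hnu j hj, hpnu j hj]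
      ring
    exact perp2 hune hperp
  have hμnn : ∀ j, j < m → 0 ≤ μ j := by
    intro j hj
    have h1 : (inner ℝ (n j - pn j) (Q j) : ℝ) = μ j * dt (u j) (Q j) := by
      rw [hμeq j hj, real_inner_smul_left, inner_Jv]
    rw [inner_sub_left, hnQ j hj] at h1
    have h2 : 0 ≤ μ j * dt (u j) (Q j) := by
      rw [← h1]
      linarith [hpnQ j hj]
    by_contra hcon
    push_neg at hcon
    nlinarith [hD j hj]
  -- ## the normalization identity
  have hsum1 : ∀ i, i < m → ∑ j ∈ Finset.range m, (μ j / 2) * |dt (u j) (u i)| = 1 := by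
    intro i hi
    set F : ℕ → ℝ := fun j => (inner ℝ (n j) (u i) : ℝ) with hFdef
    set Fp : ℕ → ℝ := fun j => if j = 0 then -(F (m-1)) else F (j-1) with hFpdef
    have hFp0 : Fp 0 = -(F (m-1)) := by
      rw [hFpdef]
      norm_num
    have hFpj : ∀ j, j ≠ 0 → Fp j = F (j-1) := by
      intro j hj
      rw [hFpdef]
      simp only [hj, if_neg, ite_false]
    have hFp : ∀ j, (inner ℝ (pn j) (u i) : ℝ) = Fp j := by
      intro j
      by_cases hj0 : j = 0
      · rw [hj0, hpn0, inner_neg_left, hFp0, hFdef]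
      · rw [hpnpos j hj0, hFpj j hj0, hFdef]
    have hμdt : ∀ j, j < m → μ j * dt (u j) (u i) = F j - Fp j := by
      intro j hj
      have h1 : (inner ℝ (n j - pn j) (u i) : ℝ) = μ j * dt (u j) (u i) := by
        rw [hμeq j hj, real_inner_smul_left, inner_Jv]
      rw [inner_sub_left, hFp j] at h1
      rw [← h1, hFdef]
    have hterm : ∀ j ∈ Finset.range m, (μ j / 2) * |dt (u j) (u i)| =
        (if j < i then (F j - Fp j) / 2 else if j = i then 0 else -((F j - Fp j) / 2)) := by
      intro j hjr
      have hj : j < m := Finset.mem_range.1 hjr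
      rcases lt_trichotomy j i with h | h | h
      · rw [if_pos h, abs_of_nonneg (le_of_lt (horder j i h hi)), ← hμdt j hj]
        ring
      · rw [if_neg (by omega), if_pos h, h, dt_self, abs_zero, mul_zero]
      · rw [if_neg (by omega), if_neg (by omega)]
        have hneg : dt (u j) (u i) < 0 := by
          have h2 := horder i j h hj
          rw [dt_swap] at h2
          linarith
        rw [abs_of_nonpos (le_of_lt hneg), ← hμdt j hj]
        ring
    rw [Finset.sum_congr rfl hterm]
    have hsplit : (∑ j ∈ Finset.range m,
          (if j < i then (F j - Fp j) / 2 else if j = i then 0 else -((F j - Fp j) / 2)))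
        = (∑ j ∈ Finset.range i, (F j - Fp j) / 2)
          + ∑ j ∈ Finset.Ico (i+1) m, -((F j - Fp j) / 2) := by
      rw [Finset.range_eq_Ico,
        ← Finset.sum_Ico_consecutive _ (Nat.zero_le (i+1)) (by omega : i + 1 ≤ m)]
      congr 1
      · rw [← Finset.range_eq_Ico, Finset.sum_range_succ]
        have h0 : (if i < i then (F i - Fp i) / 2 else if i = i then 0
            else -((F i - Fp i) / 2)) = 0 := by
          rw [if_neg (lt_irrefl i), if_pos rfl]
        rw [h0, add_zero]
        apply Finset.sum_congr rfl
        intro j hj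
        rw [if_pos (Finset.mem_range.1 hj)]
      · apply Finset.sum_congr rfl
        intro j hj
        have hj1 := (Finset.mem_Ico.1 hj).1
        rw [if_neg (by omega), if_neg (by omega)]
    have hA : (∑ j ∈ Finset.range i, (F j - Fp j) / 2)
        = if i = 0 then 0 else (F (m-1) + F (i-1)) / 2 := by
      by_cases hi0 : i = 0
      · rw [if_pos hi0, hi0, Finset.range_zero, Finset.sum_empty]
      · rw [if_neg hi0, Finset.range_eq_Ico,
          Finset.sum_eq_sum_Ico_succ_bot (by omega : 0 < i)]
        have hmid : (∑ j ∈ Finset.Ico 1 i, (F j - Fp j) / 2)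
            = (F (i-1) - F 0) / 2 := by
          rw [Finset.sum_congr rfl (fun j hj => by
            rw [hFpj j (by have := (Finset.mem_Ico.1 hj).1; omega)])]
          rw [Finset.sum_Ico_eq_sum_range]
          have hcong : ∀ k ∈ Finset.range (i - 1),
              (F (1 + k) - F (1 + k - 1)) / 2 = (F (k+1) - F k) / 2 := by
            intro k _
            have e2 : 1 + k - 1 = k := by omega
            have e1 : 1 + k = k + 1 := by omega
            rw [e2, e1]
          rw [Finset.sum_congr rfl hcong, ← Finset.sum_div, Finset.sum_range_sub F (i-1)]
        rw [hmid, hFp0]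
        ring
    have hC : (∑ j ∈ Finset.Ico (i+1) m, -((F j - Fp j) / 2))
        = -((F (m-1) - F i) / 2) := by
      rw [Finset.sum_congr rfl (fun j hj => by
        rw [hFpj j (by have := (Finset.mem_Ico.1 hj).1; omega)])]
      rw [Finset.sum_Ico_eq_sum_range]
      have hcong : ∀ k ∈ Finset.range (m - (i + 1)),
          -((F (i + 1 + k) - F (i + 1 + k - 1)) / 2)
            = -((F (i + (k + 1)) - F (i + k)) / 2) := by
        intro k _
        have e2 : i + 1 + k - 1 = i + k := by omega
        have e1 : i + 1 + k = i + (k + 1) := by omega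
        rw [e2, e1]
      rw [Finset.sum_congr rfl hcong]
      have htel : (∑ k ∈ Finset.range (m - (i+1)),
          -((F (i + (k + 1)) - F (i + k)) / 2))
          = -((∑ k ∈ Finset.range (m - (i+1)), (F (i + (k + 1)) - F (i + k))) / 2) := by
        rw [Finset.sum_div, ← Finset.sum_neg_distrib]
      rw [htel, Finset.sum_range_sub (fun k => F (i + k)) (m - (i+1))]
      have e3 : i + (m - (i+1)) = m - 1 := by omega
      have e4 : i + 0 = i := by omega
      rw [e3, e4]
    rw [hsplit, hA, hC]
    have hFi : F i = 1 := hnu i hi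
    by_cases hi0 : i = 0
    · subst hi0
      rw [if_pos rfl]
      have hFm : F (m-1) = -1 := hnum1
      rw [hFm, hFi]
      norm_num
    · rw [if_neg hi0]
      have hFm1 : F (i-1) = 1 := by
        have h := hpnu i hi
        rw [hpnpos i hi0] at h
        exact h
      rw [hFi, hFm1]
      ring
    -- ## sign alignment across each cone
  have hge0 : ∀ a b, a ≤ b → b < m → 0 ≤ dt (u a) (u b) := by
    intro a b hab hb
    rcases eq_or_lt_of_le hab with rfl | h
    · rw [dt_self]
    · exact le_of_lt (horder a b h hb)
  have hle0 : ∀ a b, b ≤ a → a < m → dt (u a) (u b) ≤ 0 := by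
    intro a b hba ha
    have h := hge0 b a hba ha
    rw [dt_swap]
    linarith
  have hsign : ∀ j, j < m → ∀ k, k < m →
      (0 ≤ dt (u k) (u j) ∧ 0 ≤ dt (u k) (Q j)) ∨
      (dt (u k) (u j) ≤ 0 ∧ dt (u k) (Q j) ≤ 0) := by
    intro j hj k hk
    by_cases hjm : j = m - 1
    · left
      constructor
      · rw [hjm]
        exact hge0 k (m-1) (by omega) (by omega)
      · rw [hjm, hQlast, dt_neg_right]
        have := hle0 k 0 (by omega) hk
        linarith
    · rw [hQlt j hjm]
      rcases le_or_gt k j with h | h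
      · exact Or.inl ⟨hge0 k j h hj, hge0 k (j+1) (by omega) (by omega)⟩
      · exact Or.inr ⟨hle0 k j (by omega) hk, hle0 k (j+1) (by omega) hk⟩
  -- ## the pointwise identity
  have hmain : ∀ v : E2, N v = ∑ j ∈ Finset.range m, (μ j / 2) * |dt (u j) v| := by
    intro v
    by_cases hv0 : v = 0
    · rw [hv0, hN0]
      symm
      apply Finset.sum_eq_zero
      intro j _
      rw [dt_zero_right, abs_zero, mul_zero]
    · obtain ⟨w, hwup, hwv⟩ : ∃ w : E2, upv w ∧ (w = v ∨ w = -v) := by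
        rcases up_or_up_neg hv0 with h | h
        · exact ⟨v, h, Or.inl rfl⟩
        · exact ⟨-v, h, Or.inr rfl⟩
      have hwne : w ≠ 0 := upv_ne_zero hwup
      have hNwv : N w = N v := by
        rcases hwv with rfl | rfl
        · rfl
        · exact hNeven v
      have habsw : ∀ k, |dt (u k) w| = |dt (u k) v| := by
        intro k
        rcases hwv with rfl | rfl
        · rfl
        · rw [dt_neg_right, abs_neg]
      obtain ⟨j, hj, a, b, ha, hb, hs⟩ :
          ∃ j, j < m ∧ ∃ a b : ℝ, 0 ≤ a ∧ 0 ≤ b ∧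
            (w = a • u j + b • Q j ∨ -w = a • u j + b • Q j) := by
        have hD0 : 0 < dt (u 0) (u (m-1)) := horder 0 (m-1) (by omega) (by omega)
        have hDlast : 0 < dt (u (m-1)) (Q (m-1)) := hD (m-1) (by omega)
        rcases lt_or_ge 0 (dt w (u 0)) with h1 | h1
        · refine ⟨m-1, by omega, dt (-w) (Q (m-1)) / dt (u (m-1)) (Q (m-1)),
            dt (u (m-1)) (-w) / dt (u (m-1)) (Q (m-1)), ?_, ?_,
            Or.inr (cramer (ne_of_gt hDlast) (-w))⟩
          · apply div_nonneg _ (le_of_lt hDlast)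
            rw [hQlast, dt_neg_left, dt_neg_right, neg_neg]
            linarith
          · apply div_nonneg _ (le_of_lt hDlast)
            rw [dt_neg_right]
            have h2 := up_trans hwup (hu_up 0 (by omega)) (hu_up (m-1) (by omega)) h1 hD0
            rw [dt_swap w (u (m-1))] at h2
            linarith
        · rcases lt_or_ge 0 (dt (u (m-1)) w) with h2 | h2
          · refine ⟨m-1, by omega, dt w (Q (m-1)) / dt (u (m-1)) (Q (m-1)),
              dt (u (m-1)) w / dt (u (m-1)) (Q (m-1)), ?_, ?_,
              Or.inl (cramer (ne_of_gt hDlast) w)⟩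
            · apply div_nonneg _ (le_of_lt hDlast)
              rw [hQlast, dt_neg_right]
              linarith
            · exact div_nonneg (le_of_lt h2) (le_of_lt hDlast)
          · have hP0 : 0 ≤ dt (u 0) w := by
              rw [dt_swap]
              linarith
            set jj := Nat.findGreatest (fun k => 0 ≤ dt (u k) w) (m-1) with hjjdef
            have hjle : jj ≤ m - 1 := by
              rw [hjjdef]
              exact Nat.findGreatest_le (m-1)
            have hjj : 0 ≤ dt (u jj) w := by
              rw [hjjdef]
              exact Nat.findGreatest_spec (P := fun k => 0 ≤ dt (u k) w)
                (Nat.zero_le (m-1)) hP0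
            by_cases hjm : jj = m - 1
            · have hz : dt (u (m-1)) w = 0 := le_antisymm h2 (by rw [← hjm]; exact hjj)
              obtain ⟨c, hc, hcw⟩ := up_parallel (hu_up (m-1) (by omega)) hwup hz
              refine ⟨m-1, by omega, c, 0, le_of_lt hc, le_rfl, Or.inl ?_⟩
              rw [zero_smul, add_zero]
              exact hcw
            · have hjlt : jj < m - 1 := by omega
              have hnext : ¬ (0 ≤ dt (u (jj+1)) w) :=
                Nat.findGreatest_is_greatest (P := fun k => 0 ≤ dt (u k) w) (n := m - 1)
                  (by rw [← hjjdef]; omega) (by omega)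
              push_neg at hnext
              have hQjj : Q jj = u (jj+1) := hQlt jj (by omega)
              have hDjj : 0 < dt (u jj) (Q jj) := hD jj (by omega)
              refine ⟨jj, by omega, dt w (Q jj) / dt (u jj) (Q jj),
                dt (u jj) w / dt (u jj) (Q jj), ?_, ?_,
                Or.inl (cramer (ne_of_gt hDjj) w)⟩
              · apply div_nonneg _ (le_of_lt hDjj)
                rw [hQjj, dt_swap]
                linarith
              · exact div_nonneg hjj (le_of_lt hDjj)
      set s : E2 := a • u j + b • Q j with hsdef
      have hNs : N s = N v := by
        rcases hs with h | h
        · rw [← h, hNwv]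
        · rw [← h, hNeven, hNwv]
      have hsne : s ≠ 0 := by
        rcases hs with h | h
        · rw [← h]
          exact hwne
        · rw [← h]
          exact neg_ne_zero.2 hwne
      have hub : N s ≤ a + b := by
        have h1 := hNcombo a b (u j) (Q j) ha hb
        rw [hu_N j hj, hQN j hj] at h1
        rw [hsdef]
        linarith
      have hNspos : 0 < N s := hNpos s hsne
      have hnin : (inner ℝ (n j) s : ℝ) = a + b := by
        rw [hsdef, inner_add_right, real_inner_smul_right, real_inner_smul_right,
          hnu j hj, hnQ j hj]
        ring
      have hnorm1 : N ((N s)⁻¹ • s) = 1 := by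
        rw [hNsm _ (le_of_lt (inv_pos.2 hNspos)), inv_mul_cancel₀ (ne_of_gt hNspos)]
      have hlb : a + b ≤ N s := by
        have h8 := hull_le (n j) 1 (hgood j hj) _ (le_of_eq hnorm1)
        rw [real_inner_smul_right, hnin] at h8
        have h9 := mul_le_mul_of_nonneg_right h8 (le_of_lt hNspos)
        have h10 : ((N s)⁻¹ * (a + b)) * (N s) = a + b := by
          field_simp
        linarith
      have hNval : N v = a + b := by
        rw [← hNs]
        linarith
      have hterm2 : ∀ k ∈ Finset.range m, (μ k / 2) * |dt (u k) v| =
          a * ((μ k / 2) * |dt (u k) (u j)|) + b * ((μ k / 2) * |dt (u k) (Q j)|) := by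
        intro k hkr
        have hk := Finset.mem_range.1 hkr
        have habs2 : |dt (u k) v| = |dt (u k) s| := by
          rcases hs with h | h
          · rw [← habsw k, h]
          · rw [← habsw k, ← abs_neg, ← dt_neg_right, h]
        rw [habs2, hsdef, dt_add_right, dt_smul_right, dt_smul_right,
          abs_add_mul_of_sign ha hb (hsign j hj k hk)]
        ring
      have hRv : ∑ k ∈ Finset.range m, (μ k / 2) * |dt (u k) v|
          = a * (∑ k ∈ Finset.range m, (μ k / 2) * |dt (u k) (u j)|)
            + b * (∑ k ∈ Finset.range m, (μ k / 2) * |dt (u k) (Q j)|) := by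
        rw [Finset.sum_congr rfl hterm2, Finset.sum_add_distrib, ← Finset.mul_sum, ← Finset.mul_sum]
      have hSQ : ∑ k ∈ Finset.range m, (μ k / 2) * |dt (u k) (Q j)| = 1 := by
        by_cases hjm : j = m - 1
        · rw [hjm, hQlast,
            Finset.sum_congr rfl (fun k _ => by rw [dt_neg_right, abs_neg])]
          exact hsum1 0 (by omega)
        · rw [hQlt j hjm]
          exact hsum1 (j+1) (by omega)
      rw [hRv, hsum1 j hj, hSQ, hNval]
      ring
  -- ## rationality of the data
  have hratu : ∀ k, k < m → ratv (u k) := fun k hk => hPrat _ (hu_P k hk)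
  have hratQ : ∀ k, k < m → ratv (Q k) := by
    intro k hk
    by_cases hkm : k = m - 1
    · rw [hkm, hQlast]
      exact ratv_neg (hratu 0 (by omega))
    · rw [hQlt k hkm]
      exact hratu (k+1) (by omega)
  have hratn : ∀ k, k < m → ratv (n k) := by
    intro k hk
    obtain ⟨q, hq⟩ := rat_dt (hratu k hk) (hratQ k hk)
    rw [hndef]
    simp only
    exact ratv_smul ⟨q⁻¹, by rw [hq, Rat.cast_inv]⟩
      (ratv_Jv (ratv_sub (hratu k hk) (hratQ k hk)))
  have hratpn : ∀ k, k < m → ratv (pn k) := by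
    intro k hk
    by_cases hk0 : k = 0
    · rw [hk0, hpn0]
      exact ratv_neg (hratn (m-1) (by omega))
    · rw [hpnpos k hk0]
      exact hratn (k-1) (by omega)
  have hratμ : ∀ k, k < m → ∃ q : ℚ, μ k = (q : ℝ) := by
    intro k hk
    obtain ⟨q1, hq1⟩ := rat_inner (ratv_sub (hratn k hk) (hratpn k hk)) (ratv_Jv (hratu k hk))
    obtain ⟨q2, hq2⟩ := rat_inner (ratv_Jv (hratu k hk)) (ratv_Jv (hratu k hk))
    refine ⟨q1 / q2, ?_⟩
    rw [hμdef]
    simp only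
    rw [hq1, hq2, Rat.cast_div]
  -- ## conclusion
  refine ⟨m, fun i => (μ i.1 / 2) • Jv (u i.1), ?_, ?_⟩
  · intro i jj
    have hc : ∃ q : ℚ, μ i.1 / 2 = (q : ℝ) := by
      obtain ⟨q, hq⟩ := hratμ i.1 i.2
      exact ⟨q / 2, by rw [hq]; push_cast; ring⟩
    exact ratv_smul hc (ratv_Jv (hratu i.1 i.2)) jj
  · intro v
    rw [hmain v, ← Fin.sum_univ_eq_sum_range (fun k => (μ k / 2) * |dt (u k) v|) m]
    apply Finset.sum_congr rfl
    intro i _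
    have hnn : (0:ℝ) ≤ μ i.1 / 2 := by
      have := hμnn i.1 i.2
      linarith
    rw [real_inner_smul_left, inner_Jv, abs_mul, abs_of_nonneg hnn]
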